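/- Products of W₂-optimal couplings are W₂-optimal for product measures: if p = ⊗_{i=1}^n p_i and q = ⊗_{i=1}^n q_i are product probability measures on ℝ^{d_1} × ⋯ × ℝ^{d_n}, each p_i, q_i having finite second moments, and if for each i the coupling μ_i of (p_i, q_i) minimizes ∫‖x_i − y_i‖² dμ_i over all couplings of (p_i, q_i), then the product coupling ⊗_{i=1}^n μ_i (with coordinates reordered so that it is a measure on the product space squared) minimizes ∫‖x − y‖² dμ over all couplings μ of (p, q). -/
import Mathlib

open MeasureTheory ProbabilityTheory Filter
open scoped ENNReal NNReal Classical

set_option maxHeartbeats 1000000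

noncomputable section

/-- Squared Euclidean norm on `ι → ℝ`. -/
def vNormSq {ι : Type*} [Fintype ι] (v : ι → ℝ) : ℝ := ∑ i, (v i) ^ 2

/-- Squared Euclidean norm on the product space `Π i, (Fin (d i) → ℝ)`:
`‖x‖² = Σ_i ‖x_i‖²`. -/
def pNormSq {n : ℕ} {d : Fin n → ℕ} (x : ∀ i : Fin n, (Fin (d i) → ℝ)) : ℝ :=
  ∑ i, vNormSq (x i)

lemma measurable_vNormSq {ι : Type*} [Fintype ι] : Measurable (vNormSq (ι := ι)) := by
  unfold vNormSq
  exact Finset.measurable_sum _ fun i _ => (measurable_pi_apply i).pow_const 2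

lemma vNormSq_nonneg {ι : Type*} [Fintype ι] (v : ι → ℝ) : 0 ≤ vNormSq v :=
  Finset.sum_nonneg fun i _ => sq_nonneg _

lemma pi_map_eval {ι : Type*} [Fintype ι] {α : ι → Type*} [∀ i, MeasurableSpace (α i)]
    (μ : ∀ i, Measure (α i)) [∀ i, IsProbabilityMeasure (μ i)] (i : ι) :
    (Measure.pi μ).map (fun f => f i) = μ i := by
  ext s hs
  rw [Measure.map_apply (measurable_pi_apply i) hs]
  have : (fun f : ∀ j, α j => f i) ⁻¹' s
      = Set.pi Set.univ (Function.update (fun j => (Set.univ : Set (α j))) i s) := by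
    rw [← Set.eval_preimage]
  rw [this, Measure.pi_pi]
  rw [Finset.prod_eq_single i]
  · simp
  · intro j _ hj
    simp [Function.update_of_ne hj]
  · simp

/-- Lemma: products of `W₂`-optimal couplings are `W₂`-optimal for product
measures.  If each `μc i` is a coupling of `(p i, q i)` minimizing the expected squared
distance, then the product coupling (with coordinates reordered) is a coupling of
`(⊗ p i, ⊗ q i)` minimizing the expected squared distance. -/
theorem product_of_W2_optimal_couplings_is_W2_optimal
    (n : ℕ) (d : Fin n → ℕ)
    (p q : ∀ i : Fin n, Measure (Fin (d i) → ℝ))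
    [∀ i, IsProbabilityMeasure (p i)] [∀ i, IsProbabilityMeasure (q i)]
    (hp2 : ∀ i, (∫⁻ x, ENNReal.ofReal (vNormSq x) ∂(p i)) < ⊤)
    (hq2 : ∀ i, (∫⁻ x, ENNReal.ofReal (vNormSq x) ∂(q i)) < ⊤)
    (μc : ∀ i : Fin n, Measure ((Fin (d i) → ℝ) × (Fin (d i) → ℝ)))
    (hμc : ∀ i, (μc i).map Prod.fst = p i ∧ (μc i).map Prod.snd = q i)
    (hopt : ∀ i, ∀ γ : Measure ((Fin (d i) → ℝ) × (Fin (d i) → ℝ)),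
      γ.map Prod.fst = p i → γ.map Prod.snd = q i →
      (∫⁻ z, ENNReal.ofReal (vNormSq (z.1 - z.2)) ∂(μc i))
        ≤ ∫⁻ z, ENNReal.ofReal (vNormSq (z.1 - z.2)) ∂γ) :
    ((Measure.pi μc).map
          (fun f => ((fun i => (f i).1, fun i => (f i).2) :
            (∀ i : Fin n, (Fin (d i) → ℝ)) × (∀ i : Fin n, (Fin (d i) → ℝ))))).map
        Prod.fst = Measure.pi p
    ∧ ((Measure.pi μc).map
          (fun f => ((fun i => (f i).1, fun i => (f i).2) :
            (∀ i : Fin n, (Fin (d i) → ℝ)) × (∀ i : Fin n, (Fin (d i) → ℝ))))).map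
        Prod.snd = Measure.pi q
    ∧ ∀ γ : Measure ((∀ i : Fin n, (Fin (d i) → ℝ)) × (∀ i : Fin n, (Fin (d i) → ℝ))),
        γ.map Prod.fst = Measure.pi p → γ.map Prod.snd = Measure.pi q →
        (∫⁻ z, ENNReal.ofReal (pNormSq (z.1 - z.2))
            ∂((Measure.pi μc).map
                (fun f => ((fun i => (f i).1, fun i => (f i).2) :
                  (∀ i : Fin n, (Fin (d i) → ℝ)) × (∀ i : Fin n, (Fin (d i) → ℝ))))))
          ≤ ∫⁻ z, ENNReal.ofReal (pNormSq (z.1 - z.2)) ∂γ := by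
  have hprob : ∀ i, IsProbabilityMeasure (μc i) := by
    intro i
    constructor
    have : (μc i).map Prod.fst Set.univ = 1 := by
      rw [(hμc i).1]; exact measure_univ
    rwa [Measure.map_apply measurable_fst MeasurableSet.univ, Set.preimage_univ] at this
  have hT : Measurable (fun f : ∀ i, (Fin (d i) → ℝ) × (Fin (d i) → ℝ) =>
      ((fun i => (f i).1, fun i => (f i).2) : (∀ i, (Fin (d i) → ℝ)) × (∀ i, (Fin (d i) → ℝ)))) := by
    refine Measurable.prod ?_ ?_
    · exact measurable_pi_lambda _ fun i => (measurable_pi_apply i).fst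
    · exact measurable_pi_lambda _ fun i => (measurable_pi_apply i).snd
  -- integrand measurability
  have hmeas : Measurable (fun z : (∀ i, (Fin (d i) → ℝ)) × (∀ i, (Fin (d i) → ℝ)) =>
      ENNReal.ofReal (pNormSq (z.1 - z.2))) := by
    apply ENNReal.measurable_ofReal.comp
    unfold pNormSq
    apply Finset.measurable_sum
    intro i _
    exact measurable_vNormSq.comp
      (((measurable_pi_apply i).comp measurable_fst).sub
        ((measurable_pi_apply i).comp measurable_snd))
  have hmeasv : ∀ i : Fin n, Measurable (fun z : (Fin (d i) → ℝ) × (Fin (d i) → ℝ) =>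
      ENNReal.ofReal (vNormSq (z.1 - z.2))) := fun i =>
    ENNReal.measurable_ofReal.comp (measurable_vNormSq.comp (measurable_fst.sub measurable_snd))
  have hmi : ∀ i : Fin n, Measurable (fun z : (∀ j, (Fin (d j) → ℝ)) × (∀ j, (Fin (d j) → ℝ)) =>
      ((z.1 i, z.2 i) : (Fin (d i) → ℝ) × (Fin (d i) → ℝ))) := fun i =>
    ((measurable_pi_apply i).comp measurable_fst).prod
      ((measurable_pi_apply i).comp measurable_snd)
  -- marginals of the product coupling
  have hfst : ((Measure.pi μc).map
      (fun f => ((fun i => (f i).1, fun i => (f i).2) : (∀ i, (Fin (d i) → ℝ)) × (∀ i, (Fin (d i) → ℝ))))).map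
      Prod.fst = Measure.pi p := by
    rw [Measure.map_map measurable_fst hT]
    refine (Measure.pi_eq fun s hs => ?_).symm
    rw [Measure.map_apply (measurable_fst.comp hT) (MeasurableSet.univ_pi hs)]
    have : ((Prod.fst ∘ fun f : ∀ i, (Fin (d i) → ℝ) × (Fin (d i) → ℝ) =>
        ((fun i => (f i).1, fun i => (f i).2) : (∀ i, (Fin (d i) → ℝ)) × (∀ i, (Fin (d i) → ℝ)))) ⁻¹' Set.pi Set.univ s)
        = Set.pi Set.univ (fun i => Prod.fst ⁻¹' s i) := by
      ext f; simp [Set.mem_pi]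
    rw [this, Measure.pi_pi]
    refine Finset.prod_congr rfl fun i _ => ?_
    rw [← (hμc i).1, Measure.map_apply measurable_fst (hs i)]
  have hsnd : ((Measure.pi μc).map
      (fun f => ((fun i => (f i).1, fun i => (f i).2) : (∀ i, (Fin (d i) → ℝ)) × (∀ i, (Fin (d i) → ℝ))))).map
      Prod.snd = Measure.pi q := by
    rw [Measure.map_map measurable_snd hT]
    refine (Measure.pi_eq fun s hs => ?_).symm
    rw [Measure.map_apply (measurable_snd.comp hT) (MeasurableSet.univ_pi hs)]
    have : ((Prod.snd ∘ fun f : ∀ i, (Fin (d i) → ℝ) × (Fin (d i) → ℝ) =>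
        ((fun i => (f i).1, fun i => (f i).2) : (∀ i, (Fin (d i) → ℝ)) × (∀ i, (Fin (d i) → ℝ)))) ⁻¹' Set.pi Set.univ s)
        = Set.pi Set.univ (fun i => Prod.snd ⁻¹' s i) := by
      ext f; simp [Set.mem_pi]
    rw [this, Measure.pi_pi]
    refine Finset.prod_congr rfl fun i _ => ?_
    rw [← (hμc i).2, Measure.map_apply measurable_snd (hs i)]
  refine ⟨hfst, hsnd, ?_⟩
  intro γ hγ1 hγ2
  -- LHS equals sum over i of integrals against μc i
  have hLHS : (∫⁻ z, ENNReal.ofReal (pNormSq (z.1 - z.2))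
      ∂((Measure.pi μc).map
          (fun f => ((fun i => (f i).1, fun i => (f i).2) : (∀ i, (Fin (d i) → ℝ)) × (∀ i, (Fin (d i) → ℝ))))))
      = ∑ i, ∫⁻ z, ENNReal.ofReal (vNormSq (z.1 - z.2)) ∂(μc i) := by
    rw [lintegral_map hmeas hT]
    have h1 : ∀ f : ∀ i, (Fin (d i) → ℝ) × (Fin (d i) → ℝ),
        ENNReal.ofReal (pNormSq ((fun i => (f i).1) - fun i => (f i).2))
          = ∑ i, ENNReal.ofReal (vNormSq ((f i).1 - (f i).2)) := by
      intro f
      rw [pNormSq, ENNReal.ofReal_sum_of_nonneg (fun i _ => vNormSq_nonneg _)]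
      rfl
    simp only [h1]
    refine Eq.trans (lintegral_finset_sum _ fun i _ => ?_) ?_
    · exact ENNReal.measurable_ofReal.comp (measurable_vNormSq.comp
        ((measurable_fst.comp (measurable_pi_apply i)).sub
          (measurable_snd.comp (measurable_pi_apply i))))
    refine Finset.sum_congr rfl fun i _ => ?_
    have := hprob
    rw [← pi_map_eval μc i, lintegral_map (hmeasv i) (measurable_pi_apply i)]
  -- RHS decomposition
  have hRHS : (∫⁻ z, ENNReal.ofReal (pNormSq (z.1 - z.2)) ∂γ)
      = ∑ i, ∫⁻ z, ENNReal.ofReal (vNormSq (z.1 - z.2))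
          ∂(γ.map (fun z : (∀ i, (Fin (d i) → ℝ)) × (∀ i, (Fin (d i) → ℝ)) => ((z.1 i, z.2 i) : (Fin (d i) → ℝ) × (Fin (d i) → ℝ)))) := by
    have h1 : ∀ z : (∀ i, (Fin (d i) → ℝ)) × (∀ i, (Fin (d i) → ℝ)),
        ENNReal.ofReal (pNormSq (z.1 - z.2))
          = ∑ i, ENNReal.ofReal (vNormSq (z.1 i - z.2 i)) := by
      intro z
      rw [pNormSq, ENNReal.ofReal_sum_of_nonneg (fun i _ => vNormSq_nonneg _)]
      rfl
    simp only [h1]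
    refine Eq.trans (lintegral_finset_sum _ fun i _ => ?_) ?_
    · exact ENNReal.measurable_ofReal.comp (measurable_vNormSq.comp
        (((measurable_pi_apply i).comp measurable_fst).sub
          ((measurable_pi_apply i).comp measurable_snd)))
    refine Finset.sum_congr rfl fun i _ => ?_
    rw [lintegral_map (hmeasv i) (hmi i)]
  rw [hLHS, hRHS]
  refine Finset.sum_le_sum fun i _ => ?_
  refine hopt i _ ?_ ?_
  · rw [Measure.map_map measurable_fst (hmi i)]
    have : (Prod.fst ∘ fun z : (∀ j, (Fin (d j) → ℝ)) × (∀ j, (Fin (d j) → ℝ)) => ((z.1 i, z.2 i) : (Fin (d i) → ℝ) × (Fin (d i) → ℝ)))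
        = (fun f : ∀ j, (Fin (d j) → ℝ) => f i) ∘ Prod.fst := rfl
    rw [this, ← Measure.map_map (measurable_pi_apply i) measurable_fst, hγ1, pi_map_eval]
  · rw [Measure.map_map measurable_snd (hmi i)]
    have : (Prod.snd ∘ fun z : (∀ j, (Fin (d j) → ℝ)) × (∀ j, (Fin (d j) → ℝ)) => ((z.1 i, z.2 i) : (Fin (d i) → ℝ) × (Fin (d i) → ℝ)))
        = (fun f : ∀ j, (Fin (d j) → ℝ) => f i) ∘ Prod.snd := rfl
    rw [this, ← Measure.map_map (measurable_pi_apply i) measurable_snd, hγ2, pi_map_eval]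

end
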